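/- Suppose G is invertible and, for every j = 2, …, n, the sub-matrix Q_j := Q(W, G, (c_{il})_{n−j+1 ≤ i ≠ l ≤ n}; j) (built from the constants c_{il} with indices in {n−j+1, …, n}) is invertible. Then Q = Q(W, G, (c_{ij}); n) is invertible and there exist real constants k_{ij} (1 ≤ i,j ≤ n), k_i (1 ≤ i ≤ n) and c such that ((k_{ij}), (k_i)) satisfy the kriging constraints and Q^{-1} = M((k_{ij}), (k_i), c; n). -/

import Mathlib

open Matrix

noncomputable section

/-- Block matrix built from an n×n array of k×k real blocks. -/
def blockMat (n k : ℕ) (B : Fin n → Fin n → Matrix (Fin k) (Fin k) ℝ) :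
    Matrix (Fin n × Fin k) (Fin n × Fin k) ℝ :=
  Matrix.of fun p q => B p.1 q.1 p.2 q.2

/-- The k(n+1)×k(n+1) block matrix Q(W, G, (c_{ij}); n): diagonal blocks W,
    off-diagonal (i,j) blocks W − c_{ij}·G for i,j ≤ n, identity blocks in the
    last block row/column (except the (n+1,n+1) block, which is zero). -/
def krigQ (n k : ℕ) (W G : Matrix (Fin k) (Fin k) ℝ) (c : Fin n → Fin n → ℝ) :
    Matrix (Fin (n + 1) × Fin k) (Fin (n + 1) × Fin k) ℝ :=
  blockMat (n + 1) k fun i j =>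
    if hi : (i : ℕ) < n then
      if hj : (j : ℕ) < n then
        if i = j then W else W - c ⟨i, hi⟩ ⟨j, hj⟩ • G
      else (1 : Matrix (Fin k) (Fin k) ℝ)
    else if hj : (j : ℕ) < n then (1 : Matrix (Fin k) (Fin k) ℝ)
      else (0 : Matrix (Fin k) (Fin k) ℝ)

/-- The k(n+1)×k(n+1) block matrix M((k_{ij}), (k_i), c; n): (i,j) block
    k_{ij}·G⁻¹ for i,j ≤ n, blocks k_i·I in the last block row/column, and
    (n+1,n+1) block c·G − W. -/
def krigM (n k : ℕ) (W G : Matrix (Fin k) (Fin k) ℝ)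
    (kk : Fin n → Fin n → ℝ) (kv : Fin n → ℝ) (c : ℝ) :
    Matrix (Fin (n + 1) × Fin k) (Fin (n + 1) × Fin k) ℝ :=
  blockMat (n + 1) k fun i j =>
    if hi : (i : ℕ) < n then
      if hj : (j : ℕ) < n then kk ⟨i, hi⟩ ⟨j, hj⟩ • G⁻¹
      else kv ⟨i, hi⟩ • (1 : Matrix (Fin k) (Fin k) ℝ)
    else if hj : (j : ℕ) < n then kv ⟨j, hj⟩ • (1 : Matrix (Fin k) (Fin k) ℝ)
      else c • G - W

/-- The kriging constraints: symmetry of the k_{ij}, zero column sums of the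
    k_{ij}, and the k_i summing to one. -/
def krigConstraints (n : ℕ) (kk : Fin n → Fin n → ℝ) (kv : Fin n → ℝ) : Prop :=
  (∀ i j, kk i j = kk j i) ∧ (∀ j, ∑ i, kk i j = 0) ∧ (∑ i, kv i) = 1

/-- The k × k(n+1) block row matrix B = (W − c₁·G, …, W − cₙ·G, I). -/
def krigB (n k : ℕ) (W G : Matrix (Fin k) (Fin k) ℝ) (cs : Fin n → ℝ) :
    Matrix (Fin k) (Fin (n + 1) × Fin k) ℝ :=
  Matrix.of fun a q =>
    (if h : (q.1 : ℕ) < n then W - cs ⟨q.1, h⟩ • G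
      else (1 : Matrix (Fin k) (Fin k) ℝ)) a q.2

end

noncomputable section AuxKrig
open Matrix

variable {n k : ℕ}

def bRow (n k : ℕ) (Bb : Fin n → Matrix (Fin k) (Fin k) ℝ) :
    Matrix (Fin k) (Fin n × Fin k) ℝ :=
  Matrix.of fun a q => Bb q.1 a q.2

def bCol (n k : ℕ) (Bb : Fin n → Matrix (Fin k) (Fin k) ℝ) :
    Matrix (Fin n × Fin k) (Fin k) ℝ :=
  Matrix.of fun q a => Bb q.1 q.2 a

lemma blockMat_mul_blockMat (B C : Fin n → Fin n → Matrix (Fin k) (Fin k) ℝ) :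
    blockMat n k B * blockMat n k C = blockMat n k fun i j => ∑ l, B i l * C l j := by
  ext ⟨i, x⟩ ⟨j, y⟩
  simp [blockMat, Matrix.mul_apply, Matrix.sum_apply, Fintype.sum_prod_type]

lemma bRow_mul_blockMat (Bb : Fin n → Matrix (Fin k) (Fin k) ℝ)
    (Mb : Fin n → Fin n → Matrix (Fin k) (Fin k) ℝ) :
    bRow n k Bb * blockMat n k Mb = bRow n k fun j => ∑ l, Bb l * Mb l j := by
  ext x ⟨j, y⟩
  simp [bRow, blockMat, Matrix.mul_apply, Matrix.sum_apply, Fintype.sum_prod_type]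

lemma blockMat_mul_bCol (Mb : Fin n → Fin n → Matrix (Fin k) (Fin k) ℝ)
    (Cb : Fin n → Matrix (Fin k) (Fin k) ℝ) :
    blockMat n k Mb * bCol n k Cb = bCol n k fun i => ∑ l, Mb i l * Cb l := by
  ext ⟨i, x⟩ y
  simp [bCol, blockMat, Matrix.mul_apply, Matrix.sum_apply, Fintype.sum_prod_type]

lemma bRow_mul_bCol (Bb Cb : Fin n → Matrix (Fin k) (Fin k) ℝ) :
    bRow n k Bb * bCol n k Cb = ∑ l, Bb l * Cb l := by
  ext x y
  simp [bRow, bCol, Matrix.mul_apply, Matrix.sum_apply, Fintype.sum_prod_type]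

lemma bCol_mul_bRow (Cb Bb : Fin n → Matrix (Fin k) (Fin k) ℝ) :
    bCol n k Cb * bRow n k Bb = blockMat n k fun i j => Cb i * Bb j := by
  ext ⟨i, x⟩ ⟨j, y⟩
  simp [bRow, bCol, blockMat, Matrix.mul_apply]

lemma mul_bRow (A : Matrix (Fin k) (Fin k) ℝ) (Bb : Fin n → Matrix (Fin k) (Fin k) ℝ) :
    A * bRow n k Bb = bRow n k fun j => A * Bb j := by
  ext x ⟨j, y⟩
  simp [bRow, Matrix.mul_apply]

lemma bCol_mul (Cb : Fin n → Matrix (Fin k) (Fin k) ℝ) (A : Matrix (Fin k) (Fin k) ℝ) :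
    bCol n k Cb * A = bCol n k fun i => Cb i * A := by
  ext ⟨i, x⟩ y
  simp [bCol, Matrix.mul_apply]

lemma neg_bRow (Bb : Fin n → Matrix (Fin k) (Fin k) ℝ) :
    -(bRow n k Bb) = bRow n k fun j => -(Bb j) := by
  ext x ⟨j, y⟩; simp [bRow]

lemma neg_bCol (Cb : Fin n → Matrix (Fin k) (Fin k) ℝ) :
    -(bCol n k Cb) = bCol n k fun i => -(Cb i) := by
  ext ⟨i, x⟩ y; simp [bCol]

lemma blockMat_add (B C : Fin n → Fin n → Matrix (Fin k) (Fin k) ℝ) :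
    blockMat n k B + blockMat n k C = blockMat n k fun i j => B i j + C i j := by
  ext ⟨i, x⟩ ⟨j, y⟩; simp [blockMat]

lemma blockMat_one :
    (1 : Matrix (Fin n × Fin k) (Fin n × Fin k) ℝ)
      = blockMat n k fun i j => if i = j then 1 else 0 := by
  ext ⟨i, x⟩ ⟨j, y⟩
  by_cases hij : i = j <;> by_cases hxy : x = y <;>
    simp [blockMat, Matrix.one_apply, Prod.ext_iff, hij, hxy]

def splitEquiv (n k : ℕ) : (Fin k ⊕ (Fin (n + 1) × Fin k)) ≃ (Fin (n + 2) × Fin k) where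
  toFun x := Sum.elim (fun a => ((0 : Fin (n + 2)), a)) (fun p => (p.1.succ, p.2)) x
  invFun p := Fin.cases (Sum.inl p.2) (fun i => Sum.inr (i, p.2)) p.1
  left_inv x := by rcases x with a | ⟨i, a⟩ <;> simp
  right_inv p := by
    rcases p with ⟨i, a⟩
    induction i using Fin.cases <;> simp

@[simp] lemma splitEquiv_symm_zero (a : Fin k) :
    (splitEquiv n k).symm ((0 : Fin (n + 2)), a) = Sum.inl a := by simp [splitEquiv]

@[simp] lemma splitEquiv_symm_succ (i : Fin (n + 1)) (a : Fin k) :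
    (splitEquiv n k).symm (i.succ, a) = Sum.inr (i, a) := by simp [splitEquiv]

@[simp] lemma splitEquiv_symm_last (a : Fin k) :
    (splitEquiv n k).symm (Fin.last (n + 1), a) = Sum.inr (Fin.last n, a) := by
  rw [← Fin.succ_last]; exact splitEquiv_symm_succ _ a

@[simp] lemma splitEquiv_symm_castSucc_succ (j : Fin n) (a : Fin k) :
    (splitEquiv n k).symm ((j.succ).castSucc, a) = Sum.inr (j.castSucc, a) := by
  rw [← Fin.succ_castSucc]; exact splitEquiv_symm_succ _ a

end AuxKrig

noncomputable section StepKrig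
open Matrix Finset

@[simp] lemma fin_mk_succ {n : ℕ} (j : Fin n) (h : (j : ℕ) + 1 < n + 1) :
    (⟨(j : ℕ) + 1, h⟩ : Fin (n + 1)) = j.succ := rfl

@[simp] lemma fin_mk_castSucc {n : ℕ} (j : Fin n) (h : (j : ℕ) < n + 1) :
    (⟨(j : ℕ), h⟩ : Fin (n + 1)) = j.castSucc := rfl

lemma krig_step (k n : ℕ) (hk : 1 ≤ k) (W G : Matrix (Fin k) (Fin k) ℝ)
    (hW : W.IsSymm) (hG : G.IsSymm) (hGinv : IsUnit G)
    (c : Fin (n + 1) → Fin (n + 1) → ℝ) (hc : ∀ i j, c i j = c j i)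
    (kk' : Fin n → Fin n → ℝ) (kv' : Fin n → ℝ) (ct' : ℝ)
    (hcon : krigConstraints n kk' kv')
    (hQM : krigQ n k W G (fun i j => c i.succ j.succ) * krigM n k W G kk' kv' ct' = 1)
    (hQunit : IsUnit (krigQ (n + 1) k W G c)) :
    ∃ kk kv ct, krigConstraints (n + 1) kk kv ∧
      krigQ (n + 1) k W G c * krigM (n + 1) k W G kk kv ct = 1 := by
  obtain ⟨hsymm, hcol, hkv⟩ := hcon
  have hdG : IsUnit G.det := (Matrix.isUnit_iff_isUnit_det G).mp hGinv
  have hGG : G * G⁻¹ = 1 := Matrix.mul_nonsing_inv G hdG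
  have hGG' : G⁻¹ * G = 1 := Matrix.nonsing_inv_mul G hdG
  have hrow : ∀ i, ∑ l, kk' i l = 0 := by
    intro i
    rw [Finset.sum_congr rfl fun l _ => hsymm i l]
    exact hcol i
  set a : Fin n → ℝ := fun i => c 0 i.succ with ha
  set μ : Fin n → ℝ := fun j => kv' j - ∑ l, a l * kk' l j with hμ
  set β : ℝ := ∑ l, a l * kv' l with hβ
  set γ : ℝ := β + (∑ l, μ l * a l) - ct' with hγdef
  have hμsum : ∑ j, μ j = 1 := by
    rw [hμ]
    rw [Finset.sum_sub_distrib, hkv, Finset.sum_comm]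
    simp_rw [← Finset.mul_sum, hrow, mul_zero]
    simp
  -- block functions
  set Bb : Fin (n + 1) → Matrix (Fin k) (Fin k) ℝ :=
    fun q => if h : (q : ℕ) < n then W - a ⟨q, h⟩ • G else 1 with hBb
  set Yb : Fin (n + 1) → Matrix (Fin k) (Fin k) ℝ :=
    fun q => if h : (q : ℕ) < n then μ ⟨q, h⟩ • (1 : Matrix (Fin k) (Fin k) ℝ)
      else (ct' - β) • G with hYb
  set M'b : Fin (n + 1) → Fin (n + 1) → Matrix (Fin k) (Fin k) ℝ := fun i j =>
    if hi : (i : ℕ) < n then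
      if hj : (j : ℕ) < n then kk' ⟨i, hi⟩ ⟨j, hj⟩ • G⁻¹
      else kv' ⟨i, hi⟩ • (1 : Matrix (Fin k) (Fin k) ℝ)
    else if hj : (j : ℕ) < n then kv' ⟨j, hj⟩ • (1 : Matrix (Fin k) (Fin k) ℝ)
      else ct' • G - W with hM'b
  have hM'def : krigM n k W G kk' kv' ct' = blockMat (n + 1) k M'b := rfl
  -- reductions
  have hBc : ∀ l : Fin n, Bb l.castSucc = W - a l • G := by
    intro l; simp [hBb, l.isLt]
  have hBl : Bb (Fin.last n) = 1 := by simp [hBb]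
  have hYc : ∀ l : Fin n, Yb l.castSucc = μ l • (1 : Matrix (Fin k) (Fin k) ℝ) := by
    intro l; simp [hYb, l.isLt]
  have hYl : Yb (Fin.last n) = (ct' - β) • G := by simp [hYb]
  have hMcc : ∀ l j : Fin n, M'b l.castSucc j.castSucc = kk' l j • G⁻¹ := by
    intro l j; simp [hM'b, l.isLt, j.isLt]
  have hMcl : ∀ l : Fin n, M'b l.castSucc (Fin.last n) = kv' l • (1 : Matrix (Fin k) (Fin k) ℝ) := by
    intro l; simp [hM'b, l.isLt]
  have hMlc : ∀ j : Fin n, M'b (Fin.last n) j.castSucc = kv' j • (1 : Matrix (Fin k) (Fin k) ℝ) := by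
    intro j; simp [hM'b, j.isLt]
  have hMll : M'b (Fin.last n) (Fin.last n) = ct' • G - W := by simp [hM'b]
  -- key sums
  have I1 : ∀ j, (∑ l, Bb l * M'b l j) = Yb j := by
    intro j
    rcases Fin.eq_castSucc_or_eq_last j with ⟨j₀, rfl⟩ | rfl
    · rw [Fin.sum_univ_castSucc]
      have hsummand : ∀ l : Fin n, Bb l.castSucc * M'b l.castSucc j₀.castSucc
          = kk' l j₀ • (W * G⁻¹) - (a l * kk' l j₀) • (1 : Matrix (Fin k) (Fin k) ℝ) := by
        intro l
        rw [hBc, hMcc, mul_smul_comm, sub_mul, smul_mul_assoc, hGG]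
        module
      rw [Finset.sum_congr rfl fun l _ => hsummand l, Finset.sum_sub_distrib,
        ← Finset.sum_smul, ← Finset.sum_smul, hcol j₀, zero_smul, hBl, hMlc, hYc,
        Matrix.one_mul]
      rw [hμ]
      module
    · rw [Fin.sum_univ_castSucc]
      have hsummand : ∀ l : Fin n, Bb l.castSucc * M'b l.castSucc (Fin.last n)
          = kv' l • W - (a l * kv' l) • G := by
        intro l
        rw [hBc, hMcl, mul_smul_comm, mul_one, smul_sub]
        module
      rw [Finset.sum_congr rfl fun l _ => hsummand l, Finset.sum_sub_distrib,
        ← Finset.sum_smul, ← Finset.sum_smul, hkv, one_smul, hBl, hMll, hYl,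
        Matrix.one_mul, ← hβ]
      module
  have I3 : ∀ i, (∑ l, M'b i l * Bb l) = Yb i := by
    intro i
    rcases Fin.eq_castSucc_or_eq_last i with ⟨i₀, rfl⟩ | rfl
    · rw [Fin.sum_univ_castSucc]
      have hsummand : ∀ l : Fin n, M'b i₀.castSucc l.castSucc * Bb l.castSucc
          = kk' i₀ l • (G⁻¹ * W) - (kk' i₀ l * a l) • (1 : Matrix (Fin k) (Fin k) ℝ) := by
        intro l
        rw [hBc, hMcc, smul_mul_assoc, mul_sub, mul_smul_comm, hGG']
        module
      rw [Finset.sum_congr rfl fun l _ => hsummand l, Finset.sum_sub_distrib,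
        ← Finset.sum_smul, ← Finset.sum_smul, hrow i₀, zero_smul, hBl, hMcl, hYc,
        Matrix.mul_one]
      have : ∑ l, kk' i₀ l * a l = ∑ l, a l * kk' l i₀ := by
        refine Finset.sum_congr rfl fun l _ => ?_
        rw [hsymm i₀ l, mul_comm]
      rw [this, hμ]
      module
    · rw [Fin.sum_univ_castSucc]
      have hsummand : ∀ l : Fin n, M'b (Fin.last n) l.castSucc * Bb l.castSucc
          = kv' l • W - (a l * kv' l) • G := by
        intro l
        rw [hBc, hMlc, smul_mul_assoc, Matrix.one_mul, smul_sub]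
        module
      rw [Finset.sum_congr rfl fun l _ => hsummand l, Finset.sum_sub_distrib,
        ← Finset.sum_smul, ← Finset.sum_smul, hkv, one_smul, hBl, hMll, hYl,
        Matrix.mul_one, ← hβ]
      module
  have I2 : (∑ l, Bb l * Yb l) = W - γ • G := by
    rw [Fin.sum_univ_castSucc]
    have hsummand : ∀ l : Fin n, Bb l.castSucc * Yb l.castSucc
        = μ l • W - (μ l * a l) • G := by
      intro l
      rw [hBc, hYc, mul_smul_comm, mul_one, smul_sub]
      module
    rw [Finset.sum_congr rfl fun l _ => hsummand l, Finset.sum_sub_distrib,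
      ← Finset.sum_smul, ← Finset.sum_smul, hμsum, one_smul, hBl, hYl,
      Matrix.one_mul, hγdef]
    module
  -- matrix level
  set c' : Fin n → Fin n → ℝ := fun i j => c i.succ j.succ with hc'
  set B := bRow (n + 1) k Bb with hB
  set C := bCol (n + 1) k Bb with hC
  set Q' := krigQ n k W G c' with hQ'
  set M' := krigM n k W G kk' kv' ct' with hM'
  have hBM : B * M' = bRow (n + 1) k Yb := by
    rw [hB, hM'def, bRow_mul_blockMat]
    exact congrArg _ (funext I1)
  have hMC : M' * C = bCol (n + 1) k Yb := by
    rw [hC, hM'def, blockMat_mul_bCol]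
    exact congrArg _ (funext I3)
  have hBMC : B * (M' * C) = W - γ • G := by
    rw [hMC, hB, bRow_mul_bCol]
    exact I2
  -- Q factorization
  have hQfact : krigQ (n + 1) k W G c
      = (fromBlocks W B C Q').submatrix (splitEquiv n k).symm (splitEquiv n k).symm := by
    ext ⟨i, x⟩ ⟨j, y⟩
    induction i using Fin.cases with
    | zero =>
      induction j using Fin.cases with
      | zero => simp [krigQ, blockMat]
      | succ j =>
        rcases Fin.eq_castSucc_or_eq_last j with ⟨j₀, rfl⟩ | rfl
        · simp [krigQ, blockMat, hB, bRow, hBc, j₀.isLt, Fin.succ_ne_zero, ha,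
            (Fin.succ_ne_zero j₀.castSucc).symm]
        · simp [krigQ, blockMat, hB, bRow, hBl]
    | succ i =>
      induction j using Fin.cases with
      | zero =>
        rcases Fin.eq_castSucc_or_eq_last i with ⟨i₀, rfl⟩ | rfl
        · simp [krigQ, blockMat, hC, bCol, hBc, i₀.isLt, Fin.succ_ne_zero, ha,
            hc _ (0 : Fin (n+1))]
        · simp [krigQ, blockMat, hC, bCol, hBl]
      | succ j =>
        have : ((splitEquiv n k).symm (i.succ, x)) = Sum.inr (i, x) := splitEquiv_symm_succ i x
        simp only [Matrix.submatrix_apply, splitEquiv_symm_succ, fromBlocks_apply₂₂]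
        rw [hQ']
        by_cases hi : (i : ℕ) < n <;> by_cases hj : (j : ℕ) < n <;>
          simp [krigQ, blockMat, hc', hi, hj, Fin.ext_iff]
  -- gamma nonzero
  have hγ : γ ≠ 0 := by
    have hinvQ' : Invertible Q' := invertibleOfRightInverse _ _ hQM
    have hiO : ⅟Q' = krigM n k W G kk' kv' ct' := invOf_eq_right_inv hQM
    have hdet : (krigQ (n + 1) k W G c).det = Q'.det * (γ • G).det := by
      rw [hQfact, Matrix.det_submatrix_equiv_self, Matrix.det_fromBlocks₂₂, hiO, ← hM',
        Matrix.mul_assoc, hBMC, sub_sub_cancel]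
    have hQdet : (krigQ (n + 1) k W G c).det ≠ 0 :=
      ((Matrix.isUnit_iff_isUnit_det _).mp hQunit).ne_zero
    intro h0
    rw [hdet, h0, zero_smul, @Matrix.det_zero _ _ _ _ _ ⟨⟨0, hk⟩⟩, mul_zero] at hQdet
    exact hQdet rfl
  set E : Matrix (Fin k) (Fin k) ℝ := γ⁻¹ • G⁻¹ with hE
  have hSE : (γ • G) * E = 1 := by
    rw [hE, smul_mul_assoc, mul_smul_comm, hGG, smul_smul, mul_inv_cancel₀ hγ, one_smul]
  -- candidate inverse in block form
  set N := fromBlocks E (-(E * (B * M'))) (-((M' * C) * E)) (M' + (M' * C) * (E * (B * M'))) with hN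
  have hQN : (fromBlocks W B C Q') * N = 1 := by
    rw [hN, fromBlocks_multiply]
    have e11 : W * E + B * -((M' * C) * E) = 1 := by
      rw [Matrix.mul_neg, ← Matrix.mul_assoc, hBMC, sub_mul, hSE]
      abel
    have e12 : W * -(E * (B * M')) + B * (M' + (M' * C) * (E * (B * M'))) = 0 := by
      rw [Matrix.mul_neg, Matrix.mul_add, ← Matrix.mul_assoc B (M' * C) _, hBMC,
        ← Matrix.mul_assoc W E _, ← Matrix.mul_assoc (W - γ • G) E _, sub_mul W (γ • G) E, hSE]
      rw [Matrix.sub_mul (W * E) 1 (B * M'), Matrix.one_mul]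
      abel
    have e21 : C * E + Q' * -((M' * C) * E) = 0 := by
      rw [Matrix.mul_neg, ← Matrix.mul_assoc, ← Matrix.mul_assoc, hQM, Matrix.one_mul]
      abel
    have e22 : C * -(E * (B * M')) + Q' * (M' + (M' * C) * (E * (B * M'))) = 1 := by
      rw [Matrix.mul_neg, Matrix.mul_add, hQM, ← Matrix.mul_assoc Q' (M' * C) _,
        ← Matrix.mul_assoc Q' M' C, hQM, Matrix.one_mul]
      abel
    rw [e11, e12, e21, e22, fromBlocks_one]
  have hfull : krigQ (n + 1) k W G c
      * N.submatrix (splitEquiv n k).symm (splitEquiv n k).symm = 1 := by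
    rw [hQfact, Matrix.submatrix_mul_equiv, hQN, Matrix.submatrix_one_equiv]
  -- closed forms of the blocks of N
  have hEYc : ∀ j₀ : Fin n, E * Yb j₀.castSucc = (γ⁻¹ * μ j₀) • G⁻¹ := by
    intro j₀
    rw [hYc, hE, smul_mul_assoc, mul_smul_comm, Matrix.mul_one, smul_smul]
  have hEYl : E * Yb (Fin.last n) = (γ⁻¹ * (ct' - β)) • (1 : Matrix (Fin k) (Fin k) ℝ) := by
    rw [hYl, hE, smul_mul_assoc, mul_smul_comm, hGG', smul_smul]
  have hYEc : ∀ i₀ : Fin n, Yb i₀.castSucc * E = (γ⁻¹ * μ i₀) • G⁻¹ := by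
    intro i₀
    rw [hYc, hE, smul_mul_assoc, mul_smul_comm, Matrix.one_mul, smul_smul, mul_comm]
  have hYEl : Yb (Fin.last n) * E = (γ⁻¹ * (ct' - β)) • (1 : Matrix (Fin k) (Fin k) ℝ) := by
    rw [hYl, hE, smul_mul_assoc, mul_smul_comm, hGG, smul_smul, mul_comm]
  have hN12 : -(E * (B * M')) = bRow (n + 1) k fun j => -(E * Yb j) := by
    rw [hBM, mul_bRow, neg_bRow]
  have hN21 : -((M' * C) * E) = bCol (n + 1) k fun i => -(Yb i * E) := by
    rw [hMC, bCol_mul, neg_bCol]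
  have hN22 : M' + (M' * C) * (E * (B * M'))
      = blockMat (n + 1) k fun i j => M'b i j + Yb i * (E * Yb j) := by
    rw [hBM, hMC, mul_bRow, bCol_mul_bRow, hM'def, blockMat_add]
  -- new coefficients
  set ν : Fin (n + 1) → ℝ := fun i => Fin.cases 1 (fun i₀ => -μ i₀) i with hν
  set κ : Fin (n + 1) → Fin (n + 1) → ℝ :=
    fun i j => Fin.cases 0 (fun i₀ => Fin.cases 0 (fun j₀ => kk' i₀ j₀) j) i with hκ
  set kk : Fin (n + 1) → Fin (n + 1) → ℝ := fun i j => γ⁻¹ * (ν i * ν j) + κ i j with hkk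
  set kv : Fin (n + 1) → ℝ :=
    fun i => Fin.cases 0 (fun i₀ => kv' i₀) i + (-(γ⁻¹ * (ct' - β))) * ν i with hkvdef
  set ct : ℝ := ct' + γ⁻¹ * (ct' - β) ^ 2 with hct
  have hνsum : ∑ i, ν i = 0 := by
    rw [Fin.sum_univ_succ]
    simp [hν, hμsum]
  -- constraints
  have hconNew : krigConstraints (n + 1) kk kv := by
    refine ⟨?_, ?_, ?_⟩
    · intro i j
      rw [hkk]
      have : κ i j = κ j i := by
        induction i using Fin.cases <;> induction j using Fin.cases <;>
          simp [hκ, hsymm]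
      dsimp only
      rw [this]; ring
    · intro j
      rw [hkk]
      dsimp only
      rw [Finset.sum_add_distrib]
      have h1 : ∑ i, γ⁻¹ * (ν i * ν j) = 0 := by
        have : ∀ i, γ⁻¹ * (ν i * ν j) = (γ⁻¹ * ν j) * ν i := fun i => by ring
        rw [Finset.sum_congr rfl fun i _ => this i, ← Finset.mul_sum, hνsum, mul_zero]
      have h2 : ∑ i, κ i j = 0 := by
        rw [Fin.sum_univ_succ]
        induction j using Fin.cases with
        | zero => simp [hκ]
        | succ j₀ => simp [hκ, hcol j₀]
      rw [h1, h2, add_zero]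
    · rw [hkvdef]
      dsimp only
      rw [Finset.sum_add_distrib, ← Finset.mul_sum, hνsum, mul_zero, add_zero,
        Fin.sum_univ_succ]
      simp [hkv]
  -- cross products
  have Pcc : ∀ i₀ j₀ : Fin n, Yb i₀.castSucc * (E * Yb j₀.castSucc)
      = (μ i₀ * (γ⁻¹ * μ j₀)) • G⁻¹ := by
    intro i₀ j₀
    rw [hEYc, hYc, smul_mul_assoc, mul_smul_comm, Matrix.one_mul, smul_smul]
  have Pcl : ∀ i₀ : Fin n, Yb i₀.castSucc * (E * Yb (Fin.last n))
      = (μ i₀ * (γ⁻¹ * (ct' - β))) • (1 : Matrix (Fin k) (Fin k) ℝ) := by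
    intro i₀
    rw [hEYl, hYc, smul_mul_assoc, mul_smul_comm, Matrix.one_mul, smul_smul]
  have Plc : ∀ j₀ : Fin n, Yb (Fin.last n) * (E * Yb j₀.castSucc)
      = ((ct' - β) * (γ⁻¹ * μ j₀)) • (1 : Matrix (Fin k) (Fin k) ℝ) := by
    intro j₀
    rw [hEYc, hYl, smul_mul_assoc, mul_smul_comm, hGG, smul_smul]
  have Pll : Yb (Fin.last n) * (E * Yb (Fin.last n))
      = ((ct' - β) * (γ⁻¹ * (ct' - β))) • G := by
    rw [hEYl, hYl, smul_mul_assoc, mul_smul_comm, Matrix.mul_one, smul_smul]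
  -- M factorization
  have hMfact : krigM (n + 1) k W G kk kv ct
      = N.submatrix (splitEquiv n k).symm (splitEquiv n k).symm := by
    rw [hN, hN12, hN21, hN22]
    ext ⟨i, x⟩ ⟨j, y⟩
    induction i using Fin.cases with
    | zero =>
      induction j using Fin.cases with
      | zero =>
        simp [krigM, blockMat, hkk, hν, hκ, hE]
      | succ j =>
        rcases Fin.eq_castSucc_or_eq_last j with ⟨j₀, rfl⟩ | rfl
        · simp [krigM, blockMat, bRow, hkk, hν, hκ, j₀.isLt, hEYc]
        · simp [krigM, blockMat, bRow, hkvdef, hν, hEYl]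
    | succ i =>
      induction j using Fin.cases with
      | zero =>
        rcases Fin.eq_castSucc_or_eq_last i with ⟨i₀, rfl⟩ | rfl
        · simp [krigM, blockMat, bCol, hkk, hν, hκ, i₀.isLt, hYEc]
        · simp [krigM, blockMat, bCol, hkvdef, hν, hYEl]
      | succ j =>
        simp only [Matrix.submatrix_apply, splitEquiv_symm_succ, fromBlocks_apply₂₂]
        rcases Fin.eq_castSucc_or_eq_last i with ⟨i₀, rfl⟩ | rfl <;>
          rcases Fin.eq_castSucc_or_eq_last j with ⟨j₀, rfl⟩ | rfl
        · simp [krigM, blockMat, hkk, hν, hκ, i₀.isLt, j₀.isLt, hMcc, Pcc]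
          ring
        · simp [krigM, blockMat, hkvdef, hkk, hν, hκ, i₀.isLt, hMcl, Pcl]
          ring
        · simp [krigM, blockMat, hkvdef, hν, j₀.isLt, hMlc, Plc]
          ring
        · simp [krigM, blockMat, hct, hMll, Pll]
          ring
  exact ⟨kk, kv, ct, hconNew, by rw [hMfact]; exact hfull⟩

end StepKrig

noncomputable section MainKrig
open Matrix

lemma krig_base (k : ℕ) (W G : Matrix (Fin k) (Fin k) ℝ) (c : Fin 1 → Fin 1 → ℝ) :
    krigQ 1 k W G c * krigM 1 k W G (fun _ _ => 0) (fun _ => 1) 0 = 1 := by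
  rw [krigQ, krigM, blockMat_mul_blockMat, blockMat_one]
  refine congrArg _ (funext fun i => funext fun j => ?_)
  fin_cases i <;> fin_cases j <;> simp [Fin.sum_univ_succ]

lemma krig_main (k : ℕ) (hk : 1 ≤ k) (W G : Matrix (Fin k) (Fin k) ℝ)
    (hW : W.IsSymm) (hG : G.IsSymm) (hGinv : IsUnit G) :
    ∀ n : ℕ, 1 ≤ n → ∀ c : Fin n → Fin n → ℝ, (∀ i j, c i j = c j i) →
    (∀ j : ℕ, 2 ≤ j → (hj : j ≤ n) →
      IsUnit (krigQ j k W G fun a b =>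
        c ⟨n - j + (a : ℕ), Nat.lt_of_lt_of_le (Nat.add_lt_add_left a.isLt _) (by omega)⟩
          ⟨n - j + (b : ℕ), Nat.lt_of_lt_of_le (Nat.add_lt_add_left b.isLt _) (by omega)⟩)) →
    IsUnit (krigQ n k W G c) ∧
      ∃ kk kv ct, krigConstraints n kk kv ∧
        krigQ n k W G c * krigM n k W G kk kv ct = 1 := by
  intro n
  induction n with
  | zero => intro h; exact absurd h (by omega)
  | succ m IH =>
    intro _ c hc hsub
    by_cases hm : m = 0
    · subst hm
      have hprod := krig_base k W G c
      have hinv : Invertible (krigQ 1 k W G c) := invertibleOfRightInverse _ _ hprod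
      exact ⟨isUnit_of_invertible _, ⟨fun _ _ => 0, fun _ => 1, 0,
        ⟨fun i j => rfl, fun j => by simp, by simp⟩, hprod⟩⟩
    · have hm1 : 1 ≤ m := by omega
      have hfn : (fun (a b : Fin (m + 1)) =>
          c ⟨m + 1 - (m + 1) + (a : ℕ), by have := a.isLt; omega⟩
            ⟨m + 1 - (m + 1) + (b : ℕ), by have := b.isLt; omega⟩) = c := by
        funext a b
        congr 1 <;> exact Fin.ext (by simp)
      have hQunit : IsUnit (krigQ (m + 1) k W G c) := by
        have h := hsub (m + 1) (by omega) (le_refl _)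
        rwa [hfn] at h
      set c' : Fin m → Fin m → ℝ := fun i j => c i.succ j.succ with hc'
      have hc'symm : ∀ i j, c' i j = c' j i := fun i j => hc _ _
      have hsub' : ∀ j : ℕ, 2 ≤ j → (hj : j ≤ m) →
          IsUnit (krigQ j k W G fun a b =>
            c' ⟨m - j + (a : ℕ), Nat.lt_of_lt_of_le (Nat.add_lt_add_left a.isLt _) (by omega)⟩
              ⟨m - j + (b : ℕ), Nat.lt_of_lt_of_le (Nat.add_lt_add_left b.isLt _) (by omega)⟩) := by
        intro j h2 hj
        have h := hsub j h2 (by omega)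
        have heq : (fun (a b : Fin j) =>
            c ⟨m + 1 - j + (a : ℕ), by have := a.isLt; omega⟩
              ⟨m + 1 - j + (b : ℕ), by have := b.isLt; omega⟩)
            = fun (a b : Fin j) =>
            c' ⟨m - j + (a : ℕ), Nat.lt_of_lt_of_le (Nat.add_lt_add_left a.isLt _) (by omega)⟩
              ⟨m - j + (b : ℕ), Nat.lt_of_lt_of_le (Nat.add_lt_add_left b.isLt _) (by omega)⟩ := by
          funext a b
          rw [hc']
          congr 1 <;> exact Fin.ext (by simp [Fin.val_succ]; omega)
        rwa [heq] at h
      obtain ⟨hQ'unit, kk', kv', ct', hcon', hprod'⟩ := IH hm1 c' hc'symm hsub'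
      obtain ⟨kk, kv, ct, hcon, hprod⟩ :=
        krig_step k m hk W G hW hG hGinv c hc kk' kv' ct' hcon' hprod' hQunit
      exact ⟨hQunit, kk, kv, ct, hcon, hprod⟩

end MainKrig


/-- If G is invertible and every sub-matrix Q_j (j = 2, …, n), built from the
    constants c_{il} with indices in {n−j+1, …, n}, is invertible, then
    Q(W, G, (c_{ij}); n) is invertible and its inverse is of the form
    M((k_{ij}), (k_i), c; n) with coefficients satisfying the kriging
    constraints. -/
theorem stmt2 (k n : ℕ) (hk : 1 ≤ k) (hn : 2 ≤ n)
    (W G : Matrix (Fin k) (Fin k) ℝ) (hW : W.IsSymm) (hG : G.IsSymm)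
    (hGinv : IsUnit G)
    (c : Fin n → Fin n → ℝ) (hc : ∀ i j, c i j = c j i)
    (hsub : ∀ j : ℕ, 2 ≤ j → (hj : j ≤ n) →
      IsUnit (krigQ j k W G fun a b =>
        c ⟨n - j + (a : ℕ), by have := a.isLt; omega⟩
          ⟨n - j + (b : ℕ), by have := b.isLt; omega⟩)) :
    IsUnit (krigQ n k W G c) ∧
    ∃ (kk : Fin n → Fin n → ℝ) (kv : Fin n → ℝ) (ct : ℝ),
      krigConstraints n kk kv ∧ (krigQ n k W G c)⁻¹ = krigM n k W G kk kv ct := by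
  obtain ⟨hQ, kk, kv, ct, hcon, hprod⟩ :=
    krig_main k hk W G hW hG hGinv n (by omega) c hc hsub
  exact ⟨hQ, kk, kv, ct, hcon, Matrix.inv_eq_right_inv hprod⟩
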